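/- For any real-valued semimartingale X on a filtered probability space, the process |X_t| - |X_0| dominates the stochastic integral of sgn(X_{s-}) against X: for all t ≥ 0, |X_t| - |X_0| ≥ ∫_0^t sgn(X_{s-}) dX_s almost surely, where sgn(x) = 1 for x > 0, -1 for x < 0, and 0 for x = 0. -/

import Mathlib

open MeasureTheory Set Filter

/-- `π n : {0, …, N n} → ℝ` is a sequence of partitions of `[a, b]` with mesh tending to 0. -/
def IsPartitionSeq (a b : ℝ) (N : ℕ → ℕ) (π : ℕ → ℕ → ℝ) : Prop :=
  (∀ n, π n 0 = a) ∧ (∀ n, π n (N n) = b) ∧ (∀ n i, π n i ≤ π n (i + 1)) ∧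
  (∀ ε > (0:ℝ), ∃ n₀, ∀ n ≥ n₀, ∀ i < N n, π n (i + 1) - π n i ≤ ε)

/-- `I` is the Itô (stochastic) integral `∫_0^· H dX`: for every `t ≥ 0`, the Riemann sums of
`H` at the left endpoints of any sequence of partitions of `[0, t]` with vanishing mesh
converge in measure (in probability) to `I t`. -/
def IsItoIntegral {Ω : Type*} [MeasurableSpace Ω] (μ : Measure Ω)
    (H X I : ℝ → Ω → ℝ) : Prop :=
  ∀ t : ℝ, 0 ≤ t → ∀ (N : ℕ → ℕ) (π : ℕ → ℕ → ℝ), IsPartitionSeq 0 t N π →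
    TendstoInMeasure μ
      (fun n ω => ∑ i ∈ Finset.range (N n), H (π n i) ω * (X (π n (i + 1)) ω - X (π n i) ω))
      atTop (fun ω => I t ω)

/-- `sgn x = 1_{x>0} - 1_{x<0}`. -/
noncomputable def sgn (x : ℝ) : ℝ := if 0 < x then 1 else if x < 0 then -1 else 0

namespace TanakaAux

lemma abs_sgn_le_one (x : ℝ) : |sgn x| ≤ 1 := by
  unfold sgn; split_ifs <;> norm_num

lemma key_ineq (s a a' b b' e : ℝ) (hs : |s| ≤ 1)
    (hsa : s * a = |a| ∨ a = 0 ∨ b = a)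
    (ha : |a' - a| ≤ e / 2) (hb : |b' - b| ≤ e / 2) :
    s * (b' - a') ≤ |b| - |a| + e := by
  have hsb : s * b ≤ |b| := by
    calc s * b ≤ |s * b| := le_abs_self _
    _ = |s| * |b| := abs_mul s b
    _ ≤ 1 * |b| := by nlinarith [abs_nonneg b]
    _ = |b| := one_mul _
  have h1 : s * (b' - b) ≤ e / 2 := by
    calc s * (b' - b) ≤ |s * (b' - b)| := le_abs_self _
    _ = |s| * |b' - b| := abs_mul _ _
    _ ≤ 1 * (e / 2) := mul_le_mul hs hb (abs_nonneg _) zero_le_one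
    _ = e / 2 := one_mul _
  have h2 : -(s * (a' - a)) ≤ e / 2 := by
    have e1 : -(s * (a' - a)) = (-s) * (a' - a) := by ring
    rw [e1]
    calc (-s) * (a' - a) ≤ |(-s) * (a' - a)| := le_abs_self _
    _ = |(-s)| * |a' - a| := abs_mul _ _
    _ ≤ 1 * (e / 2) := mul_le_mul (by rwa [abs_neg]) ha (abs_nonneg _) zero_le_one
    _ = e / 2 := one_mul _
  have h3 : s * (b - a) ≤ |b| - |a| := by
    rcases hsa with h | h | h
    · nlinarith
    · subst h; simpa using hsb
    · subst h; simp
  nlinarith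

lemma eventually_abs_sub_le (f : ℝ → ℝ) (y : ℝ)
    (hf : ContinuousWithinAt f (Set.Ici y) y)
    (u : ℕ → ℝ) (hu1 : ∀ j, y ≤ u j) (hu2 : Tendsto u atTop (nhds y))
    (e : ℝ) (he : 0 < e) : ∀ᶠ j in atTop, |f (u j) - f y| ≤ e := by
  have h1 : Tendsto u atTop (nhdsWithin y (Set.Ici y)) :=
    tendsto_nhdsWithin_iff.2 ⟨hu2, Eventually.of_forall hu1⟩
  have h2 : Tendsto (fun j => f (u j)) atTop (nhds (f y)) := hf.tendsto.comp h1
  filter_upwards [Metric.tendsto_nhds.1 h2 e he] with j hj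
  rw [Real.dist_eq] at hj; exact hj.le

lemma min_add_sub_le (t x d : ℝ) (hd : 0 ≤ d) : min t (x + d) ≤ min t x + d := by
  rcases le_total t x with h | h
  · simp [min_eq_left h, min_eq_left (h.trans (by linarith : x ≤ x + d))]
    linarith [min_le_left t (x + d), min_eq_left (h.trans (by linarith : x ≤ x + d))]
  · rcases le_total t (x + d) with h2 | h2
    · rw [min_eq_left h2, min_eq_right h]; linarith
    · rw [min_eq_right h2, min_eq_right h]

lemma tendsto_delta (h : ℝ) : Tendsto (fun j : ℕ => h / 2 ^ (j + 1)) atTop (nhds 0) := by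
  have h2 : Tendsto (fun j : ℕ => ((2 : ℝ) ^ (j + 1))) atTop atTop :=
    (tendsto_pow_atTop_atTop_of_one_lt (by norm_num : (1:ℝ) < 2)).comp
      (tendsto_add_atTop_nat 1)
  exact Tendsto.const_div_atTop h2 h

lemma eventually_sgn_leftLim (f : ℝ → ℝ) (c : ℝ)
    (hrc : ContinuousWithinAt f (Set.Ici c) c)
    (hll : ∀ s : ℝ, ∃ l, Tendsto f (nhdsWithin s (Set.Iio s)) (nhds l))
    (hcne : f c ≠ 0)
    (δ : ℕ → ℝ) (hδpos : ∀ j, 0 < δ j) (hδ : Tendsto δ atTop (nhds 0)) :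
    ∀ᶠ j in atTop, sgn (Function.leftLim f (c + δ j)) * f c = |f c| := by
  have hfc2 : 0 < |f c| / 2 := by positivity
  have h1 : ∀ᶠ u in nhdsWithin c (Set.Ici c), |f u - f c| < |f c| / 2 := by
    have := Metric.tendsto_nhds.1 hrc.tendsto (|f c| / 2) hfc2
    simpa [Real.dist_eq] using this
  obtain ⟨η, hη, hball0⟩ := Metric.mem_nhdsWithin_iff.1 h1
  have hball : ∀ u, c ≤ u → dist u c < η → |f u - f c| < |f c| / 2 := fun u h1u h2u =>
    hball0 ⟨Metric.mem_ball.2 h2u, h1u⟩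
  have hev : ∀ᶠ j in atTop, δ j < η := by
    filter_upwards [Metric.tendsto_nhds.1 hδ η hη] with j hj
    rw [Real.dist_eq, sub_zero, abs_of_pos (hδpos j)] at hj; exact hj
  filter_upwards [hev] with j hj
  set p := c + δ j with hp
  have hcp : c < p := lt_add_of_pos_right _ (hδpos j)
  obtain ⟨l, hl⟩ := hll p
  have hne : nhdsWithin p (Set.Iio p) ≠ ⊥ := (nhdsLT_neBot p).ne
  have hLL : Function.leftLim f p = l := leftLim_eq_of_tendsto hl
  have hmem : ∀ᶠ u in nhdsWithin p (Set.Iio p), f u ∈ Metric.closedBall (f c) (|f c| / 2) := by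
    have hIoo : Set.Ioo c p ∈ nhdsWithin p (Set.Iio p) :=
      Ioo_mem_nhdsLT_of_mem ⟨hcp, le_refl p⟩
    filter_upwards [hIoo] with u hu
    have h2 : dist u c < η := by
      rw [Real.dist_eq, abs_of_pos (by linarith [hu.1])]
      have := hu.2; rw [hp] at this; linarith
    have := hball u (le_of_lt hu.1) h2
    rw [Metric.mem_closedBall, Real.dist_eq]; exact this.le
  haveI : (nhdsWithin p (Set.Iio p)).NeBot := nhdsLT_neBot p
  have hlmem : l ∈ Metric.closedBall (f c) (|f c| / 2) :=
    Metric.isClosed_closedBall.mem_of_tendsto hl hmem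
  rw [Metric.mem_closedBall, Real.dist_eq] at hlmem
  rw [hLL]
  rcases lt_or_gt_of_ne hcne with hneg | hpos
  · have habs : |f c| = -(f c) := abs_of_neg hneg
    have hl0 : l < 0 := by
      rw [habs] at hlmem
      rcases abs_le.1 hlmem with ⟨hA, hB⟩; linarith
    have hsgn : sgn l = -1 := by unfold sgn; rw [if_neg (by linarith), if_pos hl0]
    rw [hsgn, habs]; ring
  · have habs : |f c| = f c := abs_of_pos hpos
    have hl0 : 0 < l := by
      rw [habs] at hlmem
      rcases abs_le.1 hlmem with ⟨hA, hB⟩; linarith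
    have hsgn : sgn l = 1 := by unfold sgn; rw [if_pos hl0]
    rw [hsgn, habs]; ring

/-- shifted partition points of `[0,t]`: `0, δ, h+δ, 2h+δ, …` capped at `t`,
with `h = t/(n+1)`, `δ = h/2^(j+1)`. -/
noncomputable def Qpt (t : ℝ) (n j : ℕ) : ℕ → ℝ
  | 0 => 0
  | (i + 1) => min t ((i : ℝ) * (t / (n + 1)) + (t / (n + 1)) / 2 ^ (j + 1))

/-- limiting (unshifted) points. -/
noncomputable def Rpt (t : ℝ) (n : ℕ) : ℕ → ℝ
  | 0 => 0
  | (i + 1) => min t ((i : ℝ) * (t / (n + 1)))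

lemma stepA (f : ℝ → ℝ)
    (hc : ∀ s : ℝ, ContinuousWithinAt f (Set.Ici s) s)
    (hll : ∀ s : ℝ, ∃ l, Tendsto f (nhdsWithin s (Set.Iio s)) (nhds l))
    (t : ℝ) (ht : 0 < t) (n : ℕ) (ε : ℝ) (hε : 0 < ε) :
    ∀ᶠ j in atTop,
      (∑ i ∈ Finset.range (n + 2),
        sgn (Function.leftLim f (Qpt t n j i)) * (f (Qpt t n j (i + 1)) - f (Qpt t n j i)))
      ≤ |f t| - |f 0| + ε := by
  set h : ℝ := t / (n + 1) with hh_def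
  have hh : 0 < h := by positivity
  set ε' : ℝ := ε / (n + 2) with hε'_def
  have hε' : 0 < ε' := by positivity
  set δ : ℕ → ℝ := fun j => h / 2 ^ (j + 1) with hδ_def
  have hδpos : ∀ j, 0 < δ j := fun j => by positivity
  have hδle : ∀ j, δ j ≤ h / 2 := by
    intro j
    have h2 : (2 : ℝ) ≤ 2 ^ (j + 1) := by
      calc (2:ℝ) = 2 ^ 1 := (pow_one 2).symm
      _ ≤ 2 ^ (j + 1) := pow_le_pow_right₀ (by norm_num) (by omega)
    rw [hδ_def]
    rw [div_le_div_iff₀ (by positivity) (by norm_num)]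
    nlinarith
  have hδtend : Tendsto δ atTop (nhds 0) := tendsto_delta h
  have hht : ((n : ℝ) + 1) * h = t := by rw [hh_def]; field_simp
  have hterm : ∀ i ∈ Finset.range (n + 2), ∀ᶠ j in atTop,
      sgn (Function.leftLim f (Qpt t n j i)) * (f (Qpt t n j (i + 1)) - f (Qpt t n j i))
        ≤ |f (Rpt t n (i + 1))| - |f (Rpt t n i)| + ε' := by
    intro i hi
    rw [Finset.mem_range] at hi
    cases i with
    | zero =>
      have hR1 : Rpt t n 1 = 0 := by
        simp only [Rpt, Nat.cast_zero, zero_mul]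
        exact min_eq_right ht.le
      have hb : ∀ᶠ j in atTop, |f (Qpt t n j 1) - f 0| ≤ ε' / 2 := by
        apply eventually_abs_sub_le f 0 (hc 0) (fun j => Qpt t n j 1)
        · intro j
          simp only [Qpt, Nat.cast_zero, zero_mul, zero_add]
          exact le_min ht.le (hδpos j).le
        · have hub : ∀ j, Qpt t n j 1 ≤ δ j := fun j => by
            simp only [Qpt, Nat.cast_zero, zero_mul, zero_add]; exact min_le_right _ _
          have hlb : ∀ j, 0 ≤ Qpt t n j 1 := fun j => by
            simp only [Qpt, Nat.cast_zero, zero_mul, zero_add]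
            exact le_min ht.le (hδpos j).le
          exact tendsto_of_tendsto_of_tendsto_of_le_of_le tendsto_const_nhds hδtend hlb hub
        · positivity
      filter_upwards [hb] with j hbj
      show sgn (Function.leftLim f (Qpt t n j 0)) * (f (Qpt t n j 1) - f (Qpt t n j 0))
        ≤ |f (Rpt t n 1)| - |f (Rpt t n 0)| + ε'
      have hQ0 : Qpt t n j 0 = 0 := rfl
      have hR0 : Rpt t n 0 = 0 := rfl
      rw [hQ0, hR0, hR1]
      exact key_ineq _ (f 0) (f 0) (f 0) (f (Qpt t n j 1)) ε' (abs_sgn_le_one _)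
        (Or.inr (Or.inr rfl)) (by simp; positivity) hbj
    | succ i' =>
      have hi' : (i' : ℝ) ≤ n := by exact_mod_cast Nat.lt_succ_iff.1 (by omega)
      set c : ℝ := (i' : ℝ) * h with hc_def
      have hcle : c ≤ (n : ℝ) * h := mul_le_mul_of_nonneg_right hi' hh.le
      have hcplus : ∀ j, c + δ j ≤ t := by
        intro j
        have h1 := hδle j
        nlinarith
      have hct : c ≤ t := by
        have h1 := hcplus 0
        have h2 := hδpos 0
        linarith
      have hQi : ∀ j, Qpt t n j (i' + 1) = c + δ j := fun j =>
        min_eq_right (hcplus j)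
      have hRi : Rpt t n (i' + 1) = c := min_eq_right hct
      have ha : ∀ᶠ j in atTop, |f (Qpt t n j (i' + 1)) - f c| ≤ ε' / 2 := by
        apply eventually_abs_sub_le f c (hc c) (fun j => Qpt t n j (i' + 1))
        · intro j; rw [hQi j]; linarith [hδpos j]
        · have e1 : (fun j => Qpt t n j (i' + 1)) = fun j => c + δ j := funext hQi
          rw [e1]
          simpa using tendsto_const_nhds.add hδtend
        · positivity
      have hb : ∀ᶠ j in atTop,
          |f (Qpt t n j (i' + 2)) - f (Rpt t n (i' + 2))| ≤ ε' / 2 := by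
        apply eventually_abs_sub_le f (Rpt t n (i' + 2)) (hc _) (fun j => Qpt t n j (i' + 2))
        · intro j
          show min t (((i' + 1 : ℕ) : ℝ) * h) ≤ min t (((i' + 1 : ℕ) : ℝ) * h + δ j)
          exact min_le_min le_rfl (by linarith [hδpos j])
        · have hub : ∀ j, Qpt t n j (i' + 2) ≤ Rpt t n (i' + 2) + δ j := fun j =>
            min_add_sub_le t _ _ (hδpos j).le
          have hlb : ∀ j, Rpt t n (i' + 2) ≤ Qpt t n j (i' + 2) := fun j =>
            min_le_min le_rfl (by linarith [hδpos j])
          have h2 : Tendsto (fun j => Rpt t n (i' + 2) + δ j) atTop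
              (nhds (Rpt t n (i' + 2))) := by
            simpa using tendsto_const_nhds.add hδtend
          exact tendsto_of_tendsto_of_tendsto_of_le_of_le tendsto_const_nhds h2 hlb hub
        · positivity
      have hsa : ∀ᶠ j in atTop,
          sgn (Function.leftLim f (Qpt t n j (i' + 1))) * f c = |f c| ∨ f c = 0 ∨
            f (Rpt t n (i' + 2)) = f c := by
        by_cases hfc : f c = 0
        · exact Eventually.of_forall fun j => Or.inr (Or.inl hfc)
        · filter_upwards [eventually_sgn_leftLim f c (hc c) hll hfc δ hδpos hδtend] with j hj
          rw [hQi j]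
          exact Or.inl hj
      filter_upwards [ha, hb, hsa] with j haj hbj hsaj
      show sgn (Function.leftLim f (Qpt t n j (i' + 1))) *
          (f (Qpt t n j (i' + 2)) - f (Qpt t n j (i' + 1)))
        ≤ |f (Rpt t n (i' + 2))| - |f (Rpt t n (i' + 1))| + ε'
      rw [hRi]
      exact key_ineq _ (f c) (f (Qpt t n j (i' + 1))) (f (Rpt t n (i' + 2)))
        (f (Qpt t n j (i' + 2))) ε' (abs_sgn_le_one _) hsaj haj hbj
  have hall := (eventually_all_finset (Finset.range (n + 2))).2 hterm
  filter_upwards [hall] with j hj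
  have hsum : (∑ i ∈ Finset.range (n + 2),
      sgn (Function.leftLim f (Qpt t n j i)) * (f (Qpt t n j (i + 1)) - f (Qpt t n j i)))
      ≤ ∑ i ∈ Finset.range (n + 2), (|f (Rpt t n (i + 1))| - |f (Rpt t n i)| + ε') :=
    Finset.sum_le_sum hj
  have htel : ∑ i ∈ Finset.range (n + 2), (|f (Rpt t n (i + 1))| - |f (Rpt t n i)| + ε')
      = (|f (Rpt t n (n + 2))| - |f (Rpt t n 0)|) + ((n + 2 : ℕ) : ℝ) * ε' := by
    rw [Finset.sum_add_distrib, Finset.sum_range_sub (fun i => |f (Rpt t n i)|),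
      Finset.sum_const, Finset.card_range, nsmul_eq_mul]
  have hRend : Rpt t n (n + 2) = t := by
    show min t (((n + 1 : ℕ) : ℝ) * h) = t
    have e1 : ((n + 1 : ℕ) : ℝ) * h = t := by push_cast; rw [hht]
    rw [e1, min_self]
  have hR0 : Rpt t n 0 = 0 := rfl
  have hfin : ((n + 2 : ℕ) : ℝ) * ε' = ε := by
    rw [hε'_def]; push_cast; field_simp
  rw [htel, hRend, hR0, hfin] at hsum
  exact hsum

end TanakaAux

open TanakaAux in
/-- Tanaka-type inequality: for a càdlàg semimartingale `X`,
`|X_t| - |X_0| ≥ ∫_0^t sgn(X_{s-}) dX_s` a.s., for every `t ≥ 0`. -/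
theorem stmt0 {Ω : Type*} [MeasurableSpace Ω] (μ : Measure Ω) [IsProbabilityMeasure μ]
    (X I : ℝ → Ω → ℝ)
    (hcadlag : ∀ ω, ∀ t : ℝ,
      ContinuousWithinAt (fun s => X s ω) (Set.Ici t) t ∧
      ∃ l : ℝ, Tendsto (fun s => X s ω) (nhdsWithin t (Set.Iio t)) (nhds l))
    (hI : IsItoIntegral μ (fun s ω => sgn (Function.leftLim (fun u => X u ω) s)) X I) :
    ∀ t : ℝ, 0 ≤ t → ∀ᵐ ω ∂μ, I t ω ≤ |X t ω| - |X 0 ω| := by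
  intro t ht
  rcases ht.eq_or_lt with heq | ht'
  · -- t = 0
    subst heq
    have hps : IsPartitionSeq 0 0 (fun _ => 0) (fun _ _ => 0) :=
      ⟨fun _ => rfl, fun _ => rfl, fun _ _ => le_rfl,
        fun ε hε => ⟨0, fun n _ i _ => by simpa using hε.le⟩⟩
    have hTIM := hI 0 le_rfl _ _ hps
    have hzero : ∀ ε : ℝ, 0 < ε → μ {ω | ε ≤ dist 0 (I 0 ω)} = 0 := by
      intro ε hε
      have h2 := hTIM (ENNReal.ofReal ε) (ENNReal.ofReal_pos.2 hε)
      simp only [Finset.range_zero, Finset.sum_empty] at h2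
      have e : {ω | ε ≤ dist 0 (I 0 ω)} = {ω | ENNReal.ofReal ε ≤ edist 0 (I 0 ω)} := by
        ext ω; simp only [mem_setOf_eq, edist_dist, ENNReal.ofReal_le_ofReal_iff dist_nonneg]
      rw [e]
      exact tendsto_nhds_unique tendsto_const_nhds h2
    rw [ae_iff]
    have hsub : {ω | ¬ I 0 ω ≤ |X 0 ω| - |X 0 ω|} ⊆
        ⋃ k : ℕ, {ω | 1 / ((k : ℝ) + 1) ≤ dist 0 (I 0 ω)} := by
      intro ω hω
      simp only [mem_setOf_eq, not_le, sub_self] at hω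
      obtain ⟨k, hk⟩ := exists_nat_one_div_lt hω
      refine mem_iUnion.2 ⟨k, ?_⟩
      simp only [mem_setOf_eq, Real.dist_eq, zero_sub, abs_neg, abs_of_pos hω]
      linarith
    exact measure_mono_null hsub (measure_iUnion_null fun k => hzero _ (by positivity))
  · -- t > 0
    rw [ae_iff]
    have hsub : {ω | ¬ I t ω ≤ |X t ω| - |X 0 ω|} ⊆
        ⋃ k : ℕ, {ω | |X t ω| - |X 0 ω| + 1 / ((k : ℝ) + 1) ≤ I t ω} := by
      intro ω hω
      simp only [mem_setOf_eq, not_le] at hω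
      obtain ⟨k, hk⟩ := exists_nat_one_div_lt (sub_pos.2 hω)
      exact mem_iUnion.2 ⟨k, by simp only [mem_setOf_eq]; linarith⟩
    refine measure_mono_null hsub (measure_iUnion_null fun k => ?_)
    set κ : ℝ := 1 / ((k : ℝ) + 1) with hκ_def
    have hκpos : 0 < κ := by positivity
    set A : Set Ω := {ω | |X t ω| - |X 0 ω| + κ ≤ I t ω} with hA_def
    show μ A = 0
    -- Step C : uniform smallness over the shift index, from hI and a diagonal argument
    have stepC : ∀ ε' : ENNReal, 0 < ε' → ∃ m : ℕ, ∀ j : ℕ,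
        μ {ω | κ / 2 ≤ dist
          (∑ i ∈ Finset.range (m + 2),
            sgn (Function.leftLim (fun u => X u ω) (Qpt t m j i)) *
              (X (Qpt t m j (i + 1)) ω - X (Qpt t m j i) ω)) (I t ω)} ≤ ε' := by
      intro ε' hε'
      by_contra hcon
      push_neg at hcon
      choose jf hjf using hcon
      have hps : IsPartitionSeq 0 t (fun n => n + 2) (fun n => Qpt t n (jf n)) := by
        refine ⟨fun n => rfl, ?_, ?_, ?_⟩
        · intro n
          show min t (((n + 1 : ℕ) : ℝ) * (t / (n + 1)) + (t / (n + 1)) / 2 ^ (jf n + 1)) = t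
          apply min_eq_left
          have e1 : ((n + 1 : ℕ) : ℝ) * (t / (n + 1)) = t := by push_cast; field_simp
          rw [e1]
          have : 0 ≤ (t / ((n : ℝ) + 1)) / 2 ^ (jf n + 1) := by positivity
          linarith
        · intro n i
          cases i with
          | zero =>
            show (0:ℝ) ≤ min t (((0:ℕ) : ℝ) * (t / (n + 1)) + (t / (n + 1)) / 2 ^ (jf n + 1))
            apply le_min ht'.le
            positivity
          | succ i =>
            show min t (((i:ℕ) : ℝ) * (t / (n + 1)) + (t / (n + 1)) / 2 ^ (jf n + 1))
              ≤ min t (((i + 1 : ℕ) : ℝ) * (t / (n + 1)) + (t / (n + 1)) / 2 ^ (jf n + 1))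
            apply min_le_min le_rfl
            have h1 : 0 ≤ t / ((n : ℝ) + 1) := by positivity
            push_cast
            nlinarith
        · intro ε hε
          obtain ⟨n₀, hn₀⟩ := exists_nat_gt (t / ε)
          refine ⟨n₀, fun n hn i _ => ?_⟩
          have hmesh : t / ((n : ℝ) + 1) ≤ ε := by
            rw [div_le_iff₀ (by positivity)]
            have h1 : t / ε < (n : ℝ) + 1 := by
              calc t / ε < (n₀ : ℝ) := hn₀
              _ ≤ (n : ℝ) := by exact_mod_cast hn
              _ ≤ (n : ℝ) + 1 := by linarith
            rw [div_lt_iff₀ hε] at h1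
            linarith [mul_comm ε ((n:ℝ)+1)]
          have hδh : (t / ((n : ℝ) + 1)) / 2 ^ (jf n + 1) ≤ t / ((n : ℝ) + 1) := by
            apply div_le_self (by positivity)
            have : (1:ℝ) ≤ 2 := by norm_num
            calc (1:ℝ) = 1 ^ (jf n + 1) := (one_pow _).symm
            _ ≤ 2 ^ (jf n + 1) := by
                apply pow_le_pow_left₀ <;> norm_num
          cases i with
          | zero =>
            show min t (((0:ℕ) : ℝ) * (t / (n + 1)) + (t / (n + 1)) / 2 ^ (jf n + 1)) - 0 ≤ ε
            push_cast
            rw [zero_mul, zero_add, sub_zero]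
            calc min t ((t / ((n:ℝ) + 1)) / 2 ^ (jf n + 1)) ≤ (t / ((n:ℝ) + 1)) / 2 ^ (jf n + 1) :=
              min_le_right _ _
            _ ≤ t / ((n:ℝ) + 1) := hδh
            _ ≤ ε := hmesh
          | succ i =>
            show min t (((i + 1 : ℕ) : ℝ) * (t / (n + 1)) + (t / (n + 1)) / 2 ^ (jf n + 1)) -
              min t (((i:ℕ) : ℝ) * (t / (n + 1)) + (t / (n + 1)) / 2 ^ (jf n + 1)) ≤ ε
            have e1 : ((i + 1 : ℕ) : ℝ) * (t / (n + 1)) + (t / (n + 1)) / 2 ^ (jf n + 1)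
                = (((i:ℕ) : ℝ) * (t / (n + 1)) + (t / (n + 1)) / 2 ^ (jf n + 1)) +
                  t / ((n:ℝ) + 1) := by push_cast; ring
            rw [e1]
            have h2 := min_add_sub_le t
              (((i:ℕ) : ℝ) * (t / (n + 1)) + (t / (n + 1)) / 2 ^ (jf n + 1))
              (t / ((n:ℝ) + 1)) (by positivity)
            linarith
      have hTIM := hI t ht (fun n => n + 2) (fun n => Qpt t n (jf n)) hps (ENNReal.ofReal (κ / 2))
        (ENNReal.ofReal_pos.2 (by positivity))
      obtain ⟨M, hM⟩ := ENNReal.tendsto_atTop_zero.1 hTIM ε' hε'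
      have hMM := hM M le_rfl
      simp only [edist_dist, ENNReal.ofReal_le_ofReal_iff dist_nonneg] at hMM
      exact absurd hMM (not_le.2 (hjf M))
    -- conclude μ A = 0
    by_contra hA0
    obtain ⟨m, hm⟩ := stepC (μ A / 2) (ENNReal.half_pos hA0)
    set C : ℕ → Set Ω := fun j => {ω | κ / 2 ≤ dist
      (∑ i ∈ Finset.range (m + 2),
        sgn (Function.leftLim (fun u => X u ω) (Qpt t m j i)) *
          (X (Qpt t m j (i + 1)) ω - X (Qpt t m j i) ω)) (I t ω)} with hC_def
    set D : ℕ → Set Ω := fun J => ⋂ j, ⋂ (_ : J ≤ j), C j with hD_def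
    have hincl : A ⊆ ⋃ J : ℕ, D J := by
      intro ω hω
      have hA' : |X t ω| - |X 0 ω| + κ ≤ I t ω := hω
      have hstep := stepA (fun u => X u ω) (fun s => (hcadlag ω s).1)
        (fun s => (hcadlag ω s).2) t ht' m (κ / 2) (by positivity)
      obtain ⟨J, hJ⟩ := eventually_atTop.1 hstep
      refine mem_iUnion.2 ⟨J, ?_⟩
      refine mem_iInter.2 fun j => mem_iInter.2 fun hj => ?_
      have hS := hJ j hj
      show κ / 2 ≤ dist
        (∑ i ∈ Finset.range (m + 2),
          sgn (Function.leftLim (fun u => X u ω) (Qpt t m j i)) *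
            (X (Qpt t m j (i + 1)) ω - X (Qpt t m j i) ω)) (I t ω)
      rw [Real.dist_eq]
      have h2 : (∑ i ∈ Finset.range (m + 2),
          sgn (Function.leftLim (fun u => X u ω) (Qpt t m j i)) *
            (X (Qpt t m j (i + 1)) ω - X (Qpt t m j i) ω)) ≤ |X t ω| - |X 0 ω| + κ / 2 := hS
      set Sv : ℝ := ∑ i ∈ Finset.range (m + 2),
          sgn (Function.leftLim (fun u => X u ω) (Qpt t m j i)) *
            (X (Qpt t m j (i + 1)) ω - X (Qpt t m j i) ω)
      have h3 : κ / 2 ≤ I t ω - Sv := by linarith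
      calc κ / 2 ≤ I t ω - Sv := h3
      _ = -(Sv - I t ω) := by ring
      _ ≤ |Sv - I t ω| := neg_le_abs _
    have hmono : Monotone D := by
      intro J J' hJJ ω hω
      refine mem_iInter.2 fun j => mem_iInter.2 fun hj => ?_
      exact mem_iInter.1 (mem_iInter.1 hω j) (hJJ.trans hj)
    have hDC : ∀ J, D J ⊆ C J := fun J ω hω =>
      mem_iInter.1 (mem_iInter.1 hω J) le_rfl
    have hle : μ A ≤ μ A / 2 := by
      calc μ A ≤ μ (⋃ J, D J) := measure_mono hincl
      _ = ⨆ J, μ (D J) := Directed.measure_iUnion (hmono.directed_le)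
      _ ≤ μ A / 2 := iSup_le fun J => le_trans (measure_mono (hDC J)) (hm J)
    exact absurd hle (not_le.2 (ENNReal.half_lt_self hA0 (measure_ne_top μ A)))
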